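/- Let (C, Δ, ε) be a coaugmented conilpotent k-coalgebra with coaugmentation group-like element e. Then every simple left C-contramodule (S, θ) is one-dimensional over k and its contra-action is given by θ(φ) = φ(e) for all linear φ : C → S. -/

import Mathlib

/-!
STATEMENT 12: Let (C, Δ, ε) be a coaugmented conilpotent k-coalgebra with coaugmentation
group-like element e. Then every simple left C-contramodule (S, θ) is one-dimensional over
k and its contra-action is given by θ(φ) = φ(e) for all linear φ : C → S.

Conilpotency is encoded dually: for every x ∈ ker ε there is n ≥ 1 such that every n-fold
convolution product of functionals vanishing at e kills x (this is exactly the vanishing of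
the n-fold iterated reduced comultiplication of x, since functionals vanishing at e are
precisely the functionals on C⁺ = ker ε, and pure tensors of functionals separate points of
C⁺ ⊗ ⋯ ⊗ C⁺ over a field).
-/

open TensorProduct LinearMap

noncomputable section

variable (k : Type*) [Field k]
variable (C : Type*) [AddCommGroup C] [Module k C] [Coalgebra k C]

def IsContramodule {B : Type*} [AddCommGroup B] [Module k B]
    (θ : (C →ₗ[k] B) →ₗ[k] B) : Prop :=
  (∀ Φ : C →ₗ[k] (C →ₗ[k] B),
      θ (θ ∘ₗ Φ) = θ ((TensorProduct.lift Φ.flip) ∘ₗ Coalgebra.comul)) ∧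
  (∀ b : B, θ ((LinearMap.toSpanSingleton k B b) ∘ₗ Coalgebra.counit) = b)

/-- A subspace `N` is a subcontramodule if `θ(φ) ∈ N` whenever `range φ ⊆ N`. -/
def IsSubContra {B : Type*} [AddCommGroup B] [Module k B]
    (θ : (C →ₗ[k] B) →ₗ[k] B) (N : Submodule k B) : Prop :=
  ∀ φ : C →ₗ[k] B, LinearMap.range φ ≤ N → θ φ ∈ N

/-- The convolution product on the dual algebra `C* = Hom_k(C,k)`:
`(f ⋆ g)(c) = f(c₍₁₎)g(c₍₂₎)`. -/
def conv (f g : C →ₗ[k] k) : C →ₗ[k] k :=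
  (LinearMap.mul' k k) ∘ₗ (TensorProduct.map f g) ∘ₗ Coalgebra.comul

/-- `n`-fold convolution product `f₁ ⋆ f₂ ⋆ ⋯ ⋆ fₙ` (empty product is `ε`). -/
def iterConv : (n : ℕ) → (Fin n → (C →ₗ[k] k)) → (C →ₗ[k] k)
  | 0, _ => Coalgebra.counit
  | n + 1, f => conv k C (f 0) (iterConv n (fun i => f i.succ))

lemma iterConv_zero (f : Fin 0 → (C →ₗ[k] k)) : iterConv k C 0 f = Coalgebra.counit := rfl

lemma iterConv_succ (n : ℕ) (f : Fin (n+1) → (C →ₗ[k] k)) :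
    iterConv k C (n+1) f = conv k C (f 0) (iterConv k C n fun i => f i.succ) := rfl

lemma conv_apply_eq (f g : C →ₗ[k] k) (x : C) :
    conv k C f g x = g ((TensorProduct.lid k C) (LinearMap.rTensor C f (Coalgebra.comul x))) := by
  have h : (LinearMap.mul' k k) ∘ₗ (TensorProduct.map f g) =
      g ∘ₗ (TensorProduct.lid k C).toLinearMap ∘ₗ LinearMap.rTensor C f := by
    apply TensorProduct.ext'
    intro c d
    simp [smul_eq_mul]
  show ((LinearMap.mul' k k) ∘ₗ (TensorProduct.map f g)) (Coalgebra.comul x) = _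
  rw [h]
  rfl

lemma conv_counit (f : C →ₗ[k] k) (x : C) : conv k C f Coalgebra.counit x = f x := by
  have h : TensorProduct.map f (Coalgebra.counit (R := k) (A := C)) =
      (LinearMap.rTensor k f) ∘ₗ ((Coalgebra.counit (R := k) (A := C)).lTensor C) := by
    apply TensorProduct.ext'
    intro c d
    simp
  calc conv k C f Coalgebra.counit x
      = (LinearMap.mul' k k) ((TensorProduct.map f Coalgebra.counit) (Coalgebra.comul x)) := rfl
    _ = (LinearMap.mul' k k) ((LinearMap.rTensor k f)
          ((Coalgebra.counit (R := k) (A := C)).lTensor C (Coalgebra.comul x))) := by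
        rw [h]; rfl
    _ = f x := by rw [Coalgebra.lTensor_counit_comul]; simp

/-- Pure functionals on the left factor separate points of `C ⊗ S`. -/
lemma sep_zero {S : Type*} [AddCommGroup S] [Module k S] (t : C ⊗[k] S)
    (h : ∀ f : C →ₗ[k] k, LinearMap.rTensor S f t = 0) : t = 0 := by
  classical
  set b := Module.Basis.ofVectorSpace k C
  set E : C ⊗[k] S ≃ₗ[k] (↥(Module.Basis.ofVectorSpaceIndex k C) →₀ S) :=
    (TensorProduct.congr b.repr (LinearEquiv.refl k S)).trans
      (TensorProduct.finsuppScalarLeft k S _)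
  have hcomp : ∀ j, (Finsupp.lapply j) ∘ₗ (E : C ⊗[k] S →ₗ[k] _) =
      (TensorProduct.lid k S).toLinearMap ∘ₗ LinearMap.rTensor S (b.coord j) := by
    intro j
    apply TensorProduct.ext'
    intro c s
    simp [E, b, TensorProduct.finsuppScalarLeft_apply_tmul_apply, Module.Basis.coord_apply]
  have hE : E t = 0 := by
    ext j
    have := congrArg (fun (L : C ⊗[k] S →ₗ[k] S) => L t) (hcomp j)
    simp only [LinearMap.comp_apply] at this
    simpa [h (b.coord j)] using this
  exact (map_eq_zero_iff E E.injective).mp hE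

/-- If all functionals vanishing at `e` kill `t` on the left, then `t = e ⊗ s₀`. -/
lemma sep_e {S : Type*} [AddCommGroup S] [Module k S] (e : C)
    (he_counit : Coalgebra.counit (R := k) e = (1 : k)) (t : C ⊗[k] S)
    (h : ∀ f : C →ₗ[k] k, f e = 0 → LinearMap.rTensor S f t = 0) :
    ∃ s₀ : S, t = e ⊗ₜ[k] s₀ := by
  set a : C →ₗ[k] C := (LinearMap.toSpanSingleton k C e) ∘ₗ Coalgebra.counit
  set r : C →ₗ[k] C := LinearMap.id - a
  have hre : r e = 0 := by
    simp [r, a, he_counit]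
  have h1 : LinearMap.rTensor S r t = 0 := by
    apply sep_zero
    intro f
    rw [← LinearMap.rTensor_comp_apply]
    apply h
    simp [LinearMap.comp_apply, hre]
  have h2 : LinearMap.rTensor S a t =
      e ⊗ₜ[k] ((TensorProduct.lid k S) (LinearMap.rTensor S (Coalgebra.counit) t)) := by
    have : LinearMap.rTensor S a = (TensorProduct.mk k C S e) ∘ₗ
        (TensorProduct.lid k S).toLinearMap ∘ₗ
        LinearMap.rTensor S (Coalgebra.counit (R := k) (A := C)) := by
      apply TensorProduct.ext'
      intro c s
      simp [a, TensorProduct.smul_tmul]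
    rw [this]
    rfl
  have h3 : LinearMap.rTensor S a t + LinearMap.rTensor S r t = t := by
    rw [← LinearMap.add_apply, ← LinearMap.rTensor_add]
    simp [r]
  rw [h1, add_zero] at h3
  exact ⟨_, (h2 ▸ h3).symm⟩

/-- If all functionals vanishing at `e` kill `x`, then `x` is a multiple of `e`. -/
lemma sep_scalar (e : C) (he_counit : Coalgebra.counit (R := k) e = (1 : k)) (x : C)
    (h : ∀ f : C →ₗ[k] k, f e = 0 → f x = 0) :
    x = Coalgebra.counit (R := k) x • e := by
  rw [← sub_eq_zero]
  rw [← Module.forall_dual_apply_eq_zero_iff k]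
  intro f
  have hf' : (f - f e • (Coalgebra.counit (R := k) (A := C))) e = 0 := by
    simp [he_counit]
  have := h _ hf'
  simp only [LinearMap.sub_apply, LinearMap.smul_apply, smul_eq_mul, sub_eq_zero] at this
  simp [map_sub, this, mul_comm]

set_option maxHeartbeats 2000000 in
lemma nakayama
    (e : C)
    (he_comul : Coalgebra.comul (R := k) e = e ⊗ₜ[k] e)
    (he_counit : Coalgebra.counit (R := k) e = (1 : k))
    (hconil : ∀ x ∈ LinearMap.ker (Coalgebra.counit (R := k) (A := C)),
      ∃ n : ℕ, 1 ≤ n ∧ ∀ f : Fin n → (C →ₗ[k] k),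
        (∀ i, f i e = 0) → iterConv k C n f x = 0)
    {S : Type*} [AddCommGroup S] [Module k S]
    (θ : (C →ₗ[k] S) →ₗ[k] S) (hθ : IsContramodule k C θ)
    (σ' : S →ₗ[k] (C →ₗ[k] S)) (hσθ : θ ∘ₗ σ' = LinearMap.id)
    (hσe : ∀ s : S, σ' s e = 0) (b : S) : b = 0 := by
  classical
  set ψ : ℕ → (C →ₗ[k] S) := fun n => Nat.rec (σ' b)
    (fun _ p => TensorProduct.lift (σ' ∘ₗ p).flip ∘ₗ Coalgebra.comul) n with hψdef
  have hψ0 : ψ 0 = σ' b := rfl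
  have hψs : ∀ n, ψ (n+1) = TensorProduct.lift (σ' ∘ₗ ψ n).flip ∘ₗ Coalgebra.comul :=
    fun n => rfl
  have hlift : ∀ g : C →ₗ[k] S, TensorProduct.lift (σ' ∘ₗ g).flip
      = TensorProduct.lift σ'.flip ∘ₗ LinearMap.lTensor C g := by
    intro g
    apply TensorProduct.ext'
    intro c d
    simp
  have hψe : ∀ n, ψ n e = 0 := by
    intro n
    induction n with
    | zero => exact hσe b
    | succ n ih =>
      rw [hψs n]
      simp only [LinearMap.comp_apply, he_comul, TensorProduct.lift.tmul,
        LinearMap.flip_apply]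
      exact hσe _
  have key : ∀ n : ℕ, ∀ x : C,
      (∀ f : Fin (n+1) → (C →ₗ[k] k), (∀ i, f i e = 0) → iterConv k C (n+1) f x = 0) →
      ∀ m, n ≤ m → ψ m x = 0 := by
    intro n
    induction n with
    | zero =>
      intro x hx m _
      have hx' : ∀ f : C →ₗ[k] k, f e = 0 → f x = 0 := by
        intro f hf
        have h1 := hx (fun _ => f) (fun _ => hf)
        rwa [show iterConv k C 1 (fun _ => f) = conv k C f Coalgebra.counit from rfl,
          conv_counit] at h1
      calc ψ m x = ψ m (Coalgebra.counit (R := k) x • e) := by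
            rw [← sep_scalar k C e he_counit x hx']
        _ = 0 := by rw [map_smul, hψe m, smul_zero]
    | succ n IH =>
      intro x hx m hm
      obtain ⟨m', rfl⟩ : ∃ m', m = m' + 1 := ⟨m - 1, by omega⟩
      have hm' : n ≤ m' := by omega
      have hyf : ∀ f : C →ₗ[k] k, f e = 0 →
          ψ m' ((TensorProduct.lid k C) (LinearMap.rTensor C f (Coalgebra.comul x))) = 0 := by
        intro f hf
        refine IH _ ?_ m' hm'
        intro g hg
        have hcons : ∀ i, (Fin.cons f g : Fin (n+2) → (C →ₗ[k] k)) i e = 0 := by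
          intro i
          refine Fin.cases ?_ ?_ i
          · simpa using hf
          · intro j; simpa using hg j
        have h1 := hx (Fin.cons f g) hcons
        have h2 : iterConv k C (n+2) (Fin.cons f g) = conv k C f (iterConv k C (n+1) g) := by
          rw [iterConv_succ]
          simp only [Fin.cons_zero, Fin.cons_succ]
        rw [h2, conv_apply_eq] at h1
        exact h1
      set t : C ⊗[k] S := LinearMap.lTensor C (ψ m') (Coalgebra.comul x) with ht
      have htf : ∀ f : C →ₗ[k] k, f e = 0 → LinearMap.rTensor S f t = 0 := by
        intro f hf
        have hcomm : (TensorProduct.lid k S).toLinearMap ∘ₗ LinearMap.rTensor S f ∘ₗ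
            LinearMap.lTensor C (ψ m') =
            (ψ m') ∘ₗ (TensorProduct.lid k C).toLinearMap ∘ₗ LinearMap.rTensor C f := by
          apply TensorProduct.ext'
          intro c d
          simp
        have h3 := congrArg (fun (L : C ⊗[k] C →ₗ[k] S) => L (Coalgebra.comul x)) hcomm
        simp only [LinearMap.comp_apply, LinearEquiv.coe_coe] at h3
        have h4 : (TensorProduct.lid k S) (LinearMap.rTensor S f t) = 0 := by
          rw [ht, h3]
          exact hyf f hf
        exact (TensorProduct.lid k S).injective (by rw [h4, map_zero])
      obtain ⟨s₀, hs₀⟩ := sep_e k C e he_counit t htf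
      rw [hψs m', LinearMap.comp_apply, hlift (ψ m'), LinearMap.comp_apply, ← ht, hs₀,
        TensorProduct.lift.tmul, LinearMap.flip_apply]
      exact hσe s₀
  have hbound : ∀ c : C, ∃ N, ∀ m, N ≤ m → ψ m c = 0 := by
    intro c
    have hker : c - Coalgebra.counit (R := k) c • e ∈
        LinearMap.ker (Coalgebra.counit (R := k) (A := C)) := by
      simp [LinearMap.mem_ker, map_sub, map_smul, he_counit]
    obtain ⟨n, hn1, hQ⟩ := hconil _ hker
    obtain ⟨n', rfl⟩ : ∃ n', n = n' + 1 := ⟨n - 1, by omega⟩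
    refine ⟨n', fun m hm => ?_⟩
    have h1 : ψ m (c - Coalgebra.counit (R := k) c • e) = 0 := key n' _ hQ m hm
    have h2 : ψ m c = ψ m (c - Coalgebra.counit (R := k) c • e) +
        Coalgebra.counit (R := k) c • ψ m e := by
      rw [map_sub, map_smul]
      abel
    rw [h2, h1, hψe, smul_zero, add_zero]
  choose Nof hNof using hbound
  have hfin : ∀ c : C, (Function.support fun m => ψ m c).Finite := by
    intro c
    apply Set.Finite.subset (Set.finite_Iio (Nof c))
    intro m hm
    simp only [Set.mem_Iio]
    by_contra hcon
    exact hm (hNof c m (by omega))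
  set P : C →ₗ[k] S :=
    { toFun := fun c => ∑ᶠ m, ψ m c
      map_add' := by
        intro c d
        show (∑ᶠ m, ψ m (c + d)) = (∑ᶠ m, ψ m c) + ∑ᶠ m, ψ m d
        calc (∑ᶠ m, ψ m (c + d)) = ∑ᶠ m, (ψ m c + ψ m d) :=
              finsum_congr fun m => map_add _ _ _
          _ = (∑ᶠ m, ψ m c) + ∑ᶠ m, ψ m d := finsum_add_distrib (hfin c) (hfin d)
      map_smul' := by
        intro a c
        show (∑ᶠ m, ψ m (a • c)) = a • ∑ᶠ m, ψ m c
        calc (∑ᶠ m, ψ m (a • c)) = ∑ᶠ m, a • ψ m c :=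
              finsum_congr fun m => map_smul _ _ _
          _ = a • ∑ᶠ m, ψ m c := (smul_finsum' a (hfin c)).symm } with hPdef
  have hPc : ∀ c, P c = ∑ᶠ m, ψ m c := fun c => rfl
  have htele : TensorProduct.lift (σ' ∘ₗ P).flip ∘ₗ Coalgebra.comul = P - ψ 0 := by
    apply LinearMap.ext
    intro c
    obtain ⟨F, hF⟩ := TensorProduct.exists_finset (R := k) (Coalgebra.comul (R := k) c)
    set N : ℕ := (F.sup fun p => Nof p.2) ⊔ Nof c with hN
    have hsupp : ∀ p ∈ F, (Function.support fun m => ψ m p.2) ⊆ ↑(Finset.range N) := by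
      intro p hp m hmem
      simp only [Finset.coe_range, Set.mem_Iio]
      by_contra hcon
      push_neg at hcon
      exact hmem (hNof p.2 m
        (le_trans (le_trans (Finset.le_sup (f := fun p => Nof p.2) hp) le_sup_left) hcon))
    have hLHS : (TensorProduct.lift (σ' ∘ₗ P).flip ∘ₗ Coalgebra.comul) c
        = ∑ m ∈ Finset.range N, ψ (m+1) c := by
      rw [LinearMap.comp_apply, hF, map_sum]
      have hstep : ∀ p ∈ F, TensorProduct.lift (σ' ∘ₗ P).flip (p.1 ⊗ₜ[k] p.2)
          = ∑ m ∈ Finset.range N, σ' (ψ m p.2) p.1 := by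
        intro p hp
        rw [TensorProduct.lift.tmul]
        simp only [LinearMap.flip_apply, LinearMap.comp_apply]
        rw [hPc, finsum_eq_sum_of_support_subset _ (hsupp p hp), map_sum,
          LinearMap.sum_apply]
      rw [Finset.sum_congr rfl hstep, Finset.sum_comm]
      refine Finset.sum_congr rfl ?_
      intro m _
      rw [hψs m, LinearMap.comp_apply, hF, map_sum]
      refine (Finset.sum_congr rfl ?_)
      intro p hp
      rw [TensorProduct.lift.tmul]
      simp only [LinearMap.flip_apply, LinearMap.comp_apply]
    have hsuppc : (Function.support fun m => ψ m c) ⊆ ↑(Finset.range (N+1)) := by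
      intro m hm
      simp only [Finset.coe_range, Set.mem_Iio]
      by_contra hcon
      exact hm (hNof c m (by omega))
    have hRHS : (P - ψ 0) c = ∑ m ∈ Finset.range N, ψ (m+1) c := by
      rw [LinearMap.sub_apply, hPc, finsum_eq_sum_of_support_subset _ hsuppc,
        Finset.sum_range_succ']
      abel
    rw [hLHS, hRHS]
  have h1 := hθ.1 (σ' ∘ₗ P)
  have h2 : θ ∘ₗ (σ' ∘ₗ P) = P := by
    rw [← LinearMap.comp_assoc, hσθ, LinearMap.id_comp]
  rw [h2, htele, map_sub] at h1
  have h4 : θ (ψ 0) = 0 := sub_eq_self.mp h1.symm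
  rw [hψ0] at h4
  have h5 := LinearMap.congr_fun hσθ b
  simp only [LinearMap.comp_apply, LinearMap.id_apply] at h5
  rw [← h5, h4]


theorem simple_contramodule_over_conilpotent
    -- `e` is a coaugmentation group-like element of `C`
    (e : C)
    (he_comul : Coalgebra.comul (R := k) e = e ⊗ₜ[k] e)
    (he_counit : Coalgebra.counit (R := k) e = (1 : k))
    -- `C` is conilpotent: the `n`-fold iterated reduced comultiplication of each
    -- `x ∈ C⁺ = ker ε` vanishes for some `n ≥ 1` (encoded dually via convolutions of
    -- functionals vanishing at `e`)
    (hconil : ∀ x ∈ LinearMap.ker (Coalgebra.counit (R := k) (A := C)),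
      ∃ n : ℕ, 1 ≤ n ∧ ∀ f : Fin n → (C →ₗ[k] k),
        (∀ i, f i e = 0) → iterConv k C n f x = 0)
    -- `(S, θ)` is a simple left `C`-contramodule
    (S : Type*) [AddCommGroup S] [Module k S]
    (θ : (C →ₗ[k] S) →ₗ[k] S) (hθ : IsContramodule k C θ)
    (hS_ne : Nontrivial S)
    (hS_simple : ∀ N : Submodule k S, IsSubContra k C θ N → N = ⊥ ∨ N = ⊤) :
    Module.rank k S = 1 ∧ ∀ φ : C →ₗ[k] S, θ φ = φ e := by
  classical
  set ev : (C →ₗ[k] S) →ₗ[k] S :=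
    { toFun := fun φ => φ e
      map_add' := fun φ ψ => rfl
      map_smul' := fun a φ => rfl } with hev
  have hev_apply : ∀ φ : C →ₗ[k] S, ev φ = φ e := fun φ => rfl
  have hmemker : ∀ φ : C →ₗ[k] S,
      φ - (LinearMap.toSpanSingleton k S (φ e)) ∘ₗ Coalgebra.counit ∈ LinearMap.ker ev := by
    intro φ
    rw [LinearMap.mem_ker, hev_apply]
    simp [he_counit]
  have hdecomp : ∀ φ : C →ₗ[k] S,
      θ φ = θ (φ - (LinearMap.toSpanSingleton k S (φ e)) ∘ₗ Coalgebra.counit) + φ e := by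
    intro φ
    rw [map_sub, hθ.2 (φ e), sub_add_cancel]
  set N : Submodule k S := Submodule.map θ (LinearMap.ker ev) with hN
  have hNsub : IsSubContra k C θ N := by
    intro φ hr
    rw [hdecomp φ]
    exact N.add_mem (Submodule.mem_map_of_mem (hmemker φ)) (hr ⟨e, rfl⟩)
  have hθe : ∀ φ : C →ₗ[k] S, θ φ = φ e := by
    rcases hS_simple N hNsub with hbot | htop
    · intro φ
      have h0 : θ (φ - (LinearMap.toSpanSingleton k S (φ e)) ∘ₗ Coalgebra.counit) ∈ N :=
        Submodule.mem_map_of_mem (hmemker φ)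
      rw [hbot, Submodule.mem_bot] at h0
      rw [hdecomp φ, h0, zero_add]
    · exfalso
      have hsurj : LinearMap.range (θ ∘ₗ (LinearMap.ker ev).subtype) = ⊤ := by
        rw [LinearMap.range_comp, Submodule.range_subtype]
        exact htop
      obtain ⟨σ₀, hσ₀⟩ :=
        (θ ∘ₗ (LinearMap.ker ev).subtype).exists_rightInverse_of_surjective hsurj
      set σ' : S →ₗ[k] (C →ₗ[k] S) := (LinearMap.ker ev).subtype ∘ₗ σ₀ with hσ'
      have hσθ : θ ∘ₗ σ' = LinearMap.id := by
        rw [hσ', ← LinearMap.comp_assoc]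
        exact hσ₀
      have hσe : ∀ s : S, σ' s e = 0 := by
        intro s
        have := (σ₀ s).2
        rw [LinearMap.mem_ker, hev_apply] at this
        exact this
      obtain ⟨b, hb⟩ := exists_ne (0 : S)
      exact hb (nakayama k C e he_comul he_counit hconil θ hθ σ' hσθ hσe b)
  refine ⟨?_, hθe⟩
  obtain ⟨b, hb⟩ := exists_ne (0 : S)
  have hspan : IsSubContra k C θ (Submodule.span k {b}) := by
    intro φ hr
    rw [hθe φ]
    exact hr ⟨e, rfl⟩
  rcases hS_simple _ hspan with h | h
  · exact absurd (h ▸ Submodule.mem_span_singleton_self b) (by simp [hb])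
  · refine rank_eq_one b hb ?_
    intro w
    have hw : w ∈ Submodule.span k {b} := h ▸ Submodule.mem_top
    obtain ⟨a, ha⟩ := Submodule.mem_span_singleton.mp hw
    exact ⟨a, ha⟩


end
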